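/- Let p be a prime and k, l, s natural numbers with k ≥ 1, l ≥ 1, s ≥ 1 and p^k ≥ 3, and let n = φ(p^k)·l. If m is a natural number with 2 ≤ m ≤ p^k − 1, then for every nonnegative integer b, the number of m-tuples (x_1,…,x_m) of nonnegative integers with x_1^n + ⋯ + x_m^n = b·(p^s)^n equals the number of m-tuples of nonnegative integers with x_1^n + ⋯ + x_m^n = b. -/

import Mathlib

lemma aux_k_le_totient (p k : ℕ) (hp : p.Prime) (hk : 1 ≤ k) :
    k ≤ Nat.totient (p ^ k) := by
  rw [Nat.totient_prime_pow hp hk]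
  have h1 : k - 1 < 2 ^ (k - 1) := Nat.lt_two_pow_self
  have h2 : 2 ≤ p := hp.two_le
  have h3 : 2 ^ (k - 1) ≤ p ^ (k - 1) := Nat.pow_le_pow_left h2 _
  have h4 : 0 < p ^ (k - 1) := Nat.pow_pos (by omega)
  have h5 : p ^ (k - 1) * 1 ≤ p ^ (k - 1) * (p - 1) :=
    Nat.mul_le_mul_left _ (by omega)
  omega

lemma aux_step (p k l m : ℕ) (hp : p.Prime) (hk : 1 ≤ k) (hl : 1 ≤ l)
    (n : ℕ) (hn : n = Nat.totient (p ^ k) * l)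
    (hmp : m ≤ p ^ k - 1) (c : ℕ) :
    Nat.card {x : Fin m → ℕ // ∑ i, x i ^ n = c * p ^ n} =
    Nat.card {x : Fin m → ℕ // ∑ i, x i ^ n = c} := by
  have hppos : 0 < p := hp.pos
  have hpkpos : 0 < p ^ k := Nat.pow_pos hppos
  have hkn : k ≤ n := by
    have := aux_k_le_totient p k hp hk
    calc k ≤ Nat.totient (p ^ k) := this
      _ ≤ Nat.totient (p ^ k) * l := Nat.le_mul_of_pos_right _ hl
      _ = n := hn.symm
  have hnpos : 0 < n := lt_of_lt_of_le hk hkn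
  have hpkdvd : p ^ k ∣ p ^ n := pow_dvd_pow p hkn
  haveI : NeZero (p ^ k) := ⟨hpkpos.ne'⟩
  -- key divisibility fact
  have key : ∀ x : Fin m → ℕ, (∑ i, x i ^ n = c * p ^ n) → ∀ i, p ∣ x i := by
    intro x hx
    have hcast : ∀ i : Fin m, ((x i ^ n : ℕ) : ZMod (p ^ k)) = if p ∣ x i then 0 else 1 := by
      intro i
      by_cases hdvd : p ∣ x i
      · simp only [hdvd, if_true]
        rw [ZMod.natCast_eq_zero_iff]
        exact dvd_trans hpkdvd (pow_dvd_pow_of_dvd hdvd n)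
      · simp only [hdvd, if_false]
        have hco : Nat.Coprime (x i) (p ^ k) :=
          ((Nat.Prime.coprime_iff_not_dvd hp).mpr hdvd).symm.pow_right k
        have heu : x i ^ Nat.totient (p ^ k) ≡ 1 [MOD p ^ k] :=
          Nat.ModEq.pow_totient hco
        have : x i ^ n ≡ 1 [MOD p ^ k] := by
          rw [hn, pow_mul]
          calc (x i ^ Nat.totient (p ^ k)) ^ l ≡ 1 ^ l [MOD p ^ k] := heu.pow l
            _ = 1 := one_pow l
        have := (ZMod.natCast_eq_natCast_iff _ _ _).mpr this
        simpa using this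
    have hsum : ((∑ i, x i ^ n : ℕ) : ZMod (p ^ k)) =
        ((Finset.univ.filter (fun i => ¬ p ∣ x i)).card : ZMod (p ^ k)) := by
      rw [Nat.cast_sum]
      rw [Finset.sum_congr rfl (fun i _ => hcast i)]
      rw [Finset.sum_ite, Finset.sum_const, Finset.sum_const]
      simp [Finset.filter_not]
    have hrhs : ((c * p ^ n : ℕ) : ZMod (p ^ k)) = 0 := by
      rw [ZMod.natCast_eq_zero_iff]
      exact dvd_mul_of_dvd_right hpkdvd c
    rw [hx, hrhs] at hsum
    have hdvdcard : p ^ k ∣ (Finset.univ.filter (fun i => ¬ p ∣ x i)).card := by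
      rw [← ZMod.natCast_eq_zero_iff]
      exact hsum.symm
    have hcardle : (Finset.univ.filter (fun i : Fin m => ¬ p ∣ x i)).card ≤ m := by
      calc _ ≤ (Finset.univ : Finset (Fin m)).card := Finset.card_filter_le _ _
        _ = m := by simp
    have hcard0 : (Finset.univ.filter (fun i : Fin m => ¬ p ∣ x i)).card = 0 := by
      rcases Nat.eq_zero_of_dvd_of_lt hdvdcard (by omega) with h
      · exact h
    intro i
    by_contra hdvd
    have : i ∈ Finset.univ.filter (fun i : Fin m => ¬ p ∣ x i) := by
      simp [hdvd]
    rw [Finset.card_eq_zero] at hcard0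
    simp [hcard0] at this
  have hpn : 0 < p ^ n := Nat.pow_pos hppos
  refine Nat.card_congr ?_
  refine
    { toFun := fun a => ⟨fun i => a.1 i / p, ?_⟩
      invFun := fun b => ⟨fun i => p * b.1 i, ?_⟩
      left_inv := ?_
      right_inv := ?_ }
  · obtain ⟨x, hx⟩ := a
    have hd := key x hx
    have hrw : ∀ i, x i ^ n = p ^ n * (x i / p) ^ n := by
      intro i
      conv_lhs => rw [← Nat.mul_div_cancel' (hd i)]
      rw [mul_pow]
    simp only
    have : ∑ i, x i ^ n = p ^ n * ∑ i, (x i / p) ^ n := by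
      rw [Finset.mul_sum]
      exact Finset.sum_congr rfl (fun i _ => hrw i)
    rw [this, mul_comm c (p ^ n)] at hx
    exact Nat.eq_of_mul_eq_mul_left hpn hx
  · obtain ⟨y, hy⟩ := b
    simp only
    have : ∑ i, (p * y i) ^ n = p ^ n * ∑ i, y i ^ n := by
      rw [Finset.mul_sum]
      exact Finset.sum_congr rfl (fun i _ => by rw [mul_pow])
    rw [this, hy, mul_comm]
  · rintro ⟨x, hx⟩
    have hd := key x hx
    apply Subtype.ext
    funext i
    exact Nat.mul_div_cancel' (hd i)
  · rintro ⟨y, hy⟩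
    apply Subtype.ext
    funext i
    exact Nat.mul_div_cancel_left _ hppos

/-- If `p` is prime, `k, l, s ≥ 1`, `p^k ≥ 3`, `n = φ(p^k)·l` and `2 ≤ m ≤ p^k - 1`, then
for every `b` the number of `m`-tuples of nonnegative integers with
`x₁^n + ⋯ + x_m^n = b·(p^s)^n` equals the number with `x₁^n + ⋯ + x_m^n = b`. -/
theorem stmt_4 (p k l s m : ℕ) (hp : p.Prime) (hk : 1 ≤ k) (hl : 1 ≤ l) (hs : 1 ≤ s)
    (hpk : 3 ≤ p ^ k) (n : ℕ) (hn : n = Nat.totient (p ^ k) * l)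
    (hm : 2 ≤ m) (hmp : m ≤ p ^ k - 1) :
    ∀ b : ℕ,
      Nat.card {x : Fin m → ℕ // ∑ i, x i ^ n = b * (p ^ s) ^ n} =
      Nat.card {x : Fin m → ℕ // ∑ i, x i ^ n = b} := by
  intro b
  have hrw : (p ^ s) ^ n = (p ^ n) ^ s := by rw [← pow_mul, mul_comm, pow_mul]
  rw [hrw]
  clear hrw hs
  induction s with
  | zero => simp
  | succ t ih =>
      have h1 : b * (p ^ n) ^ (t + 1) = (b * (p ^ n) ^ t) * p ^ n := by ring
      rw [h1]
      rw [aux_step p k l m hp hk hl n hn hmp (b * (p ^ n) ^ t)]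
      exact ih
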